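/- The descending Landen transformation implies: for m ∈ (0,1), setting m₁ := 4√m/(1+√m)², one has K(1-m)/K(m) = 2·K(1-m₁)/K(m₁), where K denotes the complete elliptic integral of the first kind K(m) = ∫₀¹ dx/(√(1-x²)√(1-mx²)). -/

import Mathlib

/-- The complete elliptic integral of the first kind, `K(m) = ∫₀¹ dx/(√(1-x²)√(1-mx²))`. -/
noncomputable def ellipticK (m : ℝ) : ℝ :=
  ∫ x in (0 : ℝ)..1, 1 / (Real.sqrt (1 - x ^ 2) * Real.sqrt (1 - m * x ^ 2))

open MeasureTheory Set Real

lemma ellipticK_eq_setIntegral (m : ℝ) :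
    ellipticK m = ∫ x in Ioo (0:ℝ) 1, 1 / (Real.sqrt (1 - x ^ 2) * Real.sqrt (1 - m * x ^ 2)) := by
  rw [ellipticK, intervalIntegral.integral_of_le zero_le_one,
    MeasureTheory.integral_Ioc_eq_integral_Ioo]

lemma landen (k : ℝ) (hk0 : 0 < k) (hk1 : k < 1) :
    ellipticK (4 * k / (1 + k) ^ 2) = (1 + k) * ellipticK (k ^ 2) := by
  set φ : ℝ → ℝ := fun t => (1 + k) * t / (1 + k * t ^ 2) with hφ
  set φ' : ℝ → ℝ := fun t => (1 + k) * (1 - k * t ^ 2) / (1 + k * t ^ 2) ^ 2 with hφ'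
  have hk0' : (0:ℝ) < 1 + k := by linarith
  have ha : ∀ t : ℝ, t ∈ Ioo (0:ℝ) 1 → 0 < 1 + k * t ^ 2 := by
    intro t ht; nlinarith [ht.1, ht.2]
  have hb : ∀ t : ℝ, t ∈ Ioo (0:ℝ) 1 → 0 < 1 - k * t ^ 2 := by
    intro t ht; nlinarith [mul_pos (sub_pos.2 ht.2) (by linarith [ht.1] : (0:ℝ) < 1 + t)]
  have hderiv : ∀ t : ℝ, t ∈ Ioo (0:ℝ) 1 → HasDerivAt φ (φ' t) t := by
    intro t ht
    have h1 : HasDerivAt (fun t : ℝ => (1 + k) * t) (1 + k) t := by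
      simpa using (hasDerivAt_id t).const_mul (1 + k)
    have h2 : HasDerivAt (fun t : ℝ => 1 + k * t ^ 2) (k * (2 * t)) t := by
      simpa using ((hasDerivAt_pow 2 t).const_mul k).const_add 1
    have := h1.div h2 (by have := ha t ht; positivity)
    refine this.congr_deriv ?_
    have hat := ha t ht
    rw [hφ']
    field_simp
    ring
  have hinj : InjOn φ (Ioo (0:ℝ) 1) := by
    intro s hs t ht h
    have has := ha s hs; have hat := ha t ht
    rw [hφ, div_eq_div_iff (by positivity) (by positivity)] at h
    have key : (s - t) * ((1 + k) * (1 - k * s * t)) = 0 := by ring_nf; ring_nf at h; linarith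
    have hks : k * s < 1 := by nlinarith [hs.1, hs.2]
    have hst : k * s * t < 1 := by nlinarith [ht.1, ht.2, mul_pos hk0 hs.1]
    have : s - t = 0 := by
      rcases mul_eq_zero.1 key with h' | h'
      · exact h'
      · nlinarith
    linarith
  have hmaps : ∀ t : ℝ, t ∈ Ioo (0:ℝ) 1 → φ t ∈ Ioo (0:ℝ) 1 := by
    intro t ht
    have hat := ha t ht
    have hkt : k * t < 1 := by nlinarith [ht.1, ht.2]
    constructor
    · apply div_pos (by nlinarith [ht.1]) hat
    · rw [div_lt_one hat]
      nlinarith [mul_pos (sub_pos.2 ht.2) (sub_pos.2 hkt)]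
  have himg : φ '' Ioo (0:ℝ) 1 = Ioo (0:ℝ) 1 := by
    apply Subset.antisymm
    · rintro x ⟨t, ht, rfl⟩; exact hmaps t ht
    · have hcont : ContinuousOn φ (Icc (0:ℝ) 1) := by
        apply ContinuousOn.div (by fun_prop) (by fun_prop)
        intro t ht
        have : 0 < 1 + k * t ^ 2 := by nlinarith [ht.1, ht.2]
        positivity
      have h0 : φ 0 = 0 := by simp [hφ]
      have h1 : φ 1 = 1 := by
        show (1 + k) * 1 / (1 + k * 1 ^ 2) = 1
        rw [div_eq_one_iff_eq (by positivity)]; ring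
      have := intermediate_value_Ioo (zero_le_one) hcont
      rw [h0, h1] at this
      exact this
  set m₁ := 4 * k / (1 + k) ^ 2 with hm₁
  set g : ℝ → ℝ := fun x => 1 / (Real.sqrt (1 - x ^ 2) * Real.sqrt (1 - m₁ * x ^ 2)) with hg
  have key : ∫ x in Ioo (0:ℝ) 1, g x = ∫ t in Ioo (0:ℝ) 1, |φ' t| • g (φ t) := by
    conv_lhs => rw [← himg]
    exact integral_image_eq_integral_abs_deriv_smul measurableSet_Ioo
      (fun t ht => (hderiv t ht).hasDerivWithinAt) hinj g
  have hcongr : ∀ t ∈ Ioo (0:ℝ) 1,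
      |φ' t| • g (φ t)
        = (1 + k) * (1 / (Real.sqrt (1 - t ^ 2) * Real.sqrt (1 - k ^ 2 * t ^ 2))) := by
    intro t ht
    have hat := ha t ht
    have hbt := hb t ht
    have hc : (0:ℝ) < 1 - t ^ 2 := by nlinarith [ht.1, ht.2]
    have hd : (0:ℝ) < 1 - k ^ 2 * t ^ 2 := by nlinarith [ht.1, ht.2, mul_pos hk0 ht.1]
    have hφpos : 0 < φ' t := by rw [hφ']; positivity
    rw [abs_of_pos hφpos, smul_eq_mul]
    have e1 : 1 - φ t ^ 2 = (1 - t ^ 2) * (1 - k ^ 2 * t ^ 2) / (1 + k * t ^ 2) ^ 2 := by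
      rw [hφ]; field_simp; ring
    have e2 : 1 - m₁ * φ t ^ 2 = (1 - k * t ^ 2) ^ 2 / (1 + k * t ^ 2) ^ 2 := by
      rw [hφ, hm₁]; field_simp; ring
    have s1 : Real.sqrt (1 - φ t ^ 2)
        = Real.sqrt (1 - t ^ 2) * Real.sqrt (1 - k ^ 2 * t ^ 2) / (1 + k * t ^ 2) := by
      rw [e1, Real.sqrt_div (by positivity), Real.sqrt_mul hc.le, Real.sqrt_sq hat.le]
    have s2 : Real.sqrt (1 - m₁ * φ t ^ 2) = (1 - k * t ^ 2) / (1 + k * t ^ 2) := by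
      rw [e2, Real.sqrt_div (sq_nonneg _), Real.sqrt_sq hbt.le, Real.sqrt_sq hat.le]
    have hsc : 0 < Real.sqrt (1 - t ^ 2) := Real.sqrt_pos.2 hc
    have hsd : 0 < Real.sqrt (1 - k ^ 2 * t ^ 2) := Real.sqrt_pos.2 hd
    rw [hg]
    simp only []
    rw [s1, s2, hφ']
    field_simp
  rw [ellipticK_eq_setIntegral, ellipticK_eq_setIntegral]
  rw [key, MeasureTheory.setIntegral_congr_fun measurableSet_Ioo hcongr,
    MeasureTheory.integral_const_mul]

theorem stmt19 (m : ℝ) (hm : m ∈ Set.Ioo (0 : ℝ) 1) :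
    let m₁ : ℝ := 4 * Real.sqrt m / (1 + Real.sqrt m) ^ 2
    ellipticK (1 - m) / ellipticK m = 2 * (ellipticK (1 - m₁) / ellipticK m₁) := by
  intro m₁
  obtain ⟨hm0, hm1⟩ := hm
  set s := Real.sqrt m with hs
  have hs0 : 0 < s := Real.sqrt_pos.2 hm0
  have hs2' : s ^ 2 = m := Real.sq_sqrt hm0.le
  have hs1 : s < 1 := by nlinarith [hs2']
  have hs2 : s ^ 2 = m := Real.sq_sqrt hm0.le
  have hm₁ : m₁ = 4 * s / (1 + s) ^ 2 := rfl
  -- first Landen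
  have h1 : ellipticK m₁ = (1 + s) * ellipticK m := by
    rw [hm₁, ← hs2]; exact landen s hs0 hs1
  -- second Landen with κ = (1-s)/(1+s)
  set κ := (1 - s) / (1 + s) with hκ
  have hden : (0:ℝ) < 1 + s := by linarith
  have hκ0 : 0 < κ := div_pos (by linarith) hden
  have hκ1 : κ < 1 := by
    rw [hκ, div_lt_one hden]; linarith
  have h2' := landen κ hκ0 hκ1
  have e1 : 4 * κ / (1 + κ) ^ 2 = 1 - m := by
    rw [hκ, ← hs2]; field_simp; ring
  have e2 : κ ^ 2 = 1 - m₁ := by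
    rw [hκ, hm₁]; field_simp; ring
  have e3 : 1 + κ = 2 / (1 + s) := by
    rw [hκ]; field_simp; ring
  rw [e1, e2, e3] at h2'
  -- now combine
  have hKm : ellipticK m = ellipticK m₁ / (1 + s) := by
    rw [h1]; field_simp
  rw [h2', hKm]
  rcases eq_or_ne (ellipticK m₁) 0 with h | h
  · simp [h]
  · field_simp
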